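/- Fix κ > 0 and δ̄ > 0, and for 0 < ε < 1 set ū = ū(ε) = −1 + ε^{2/3}|ln ε|^{1/3}·δ̄. There exist C > 0 and ε₀ ∈ (0,1) such that for every 0 < ε ≤ ε₀: if A ⊆ ℝ² is a ℤ²-periodic measurable set that minimizes E, i.e. E[A] ≤ E[B] for every ℤ²-periodic measurable set B, then |A ∩ Q| ≤ C·ε^{2/3}|ln ε|^{1/3} and H¹(∂A ∩ Q) ≤ C·ε^{1/3}|ln ε|^{2/3}. (In the rescaled variables of the paper these bounds read |Ω̄⁺| ≤ C|ln ε| and |∂Ω̄⁺| ≤ C|ln ε|.) -/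

import Mathlib

open MeasureTheory Real ENNReal NNReal

noncomputable section

/-- The unit cell `Q = [0,1)^d` in `ℝ^d`. -/
def Qcell (d : ℕ) : Set (EuclideanSpace ℝ (Fin d)) :=
  WithLp.ofLp ⁻¹' (Set.univ.pi fun _ => Set.Ico (0 : ℝ) 1)

/-- The integer vector `n` viewed as a point of `ℝ^d`. -/
def zvec (d : ℕ) (n : Fin d → ℤ) : EuclideanSpace ℝ (Fin d) :=
  WithLp.toLp 2 (fun i => (n i : ℝ))

/-- A set `A ⊆ ℝ^d` is `ℤ^d`-periodic if `A + n = A` for every `n ∈ ℤ^d`. -/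
def IsPeriodicSet (d : ℕ) (A : Set (EuclideanSpace ℝ (Fin d))) : Prop :=
  ∀ (n : Fin d → ℤ) (x : EuclideanSpace ℝ (Fin d)), x + zvec d n ∈ A ↔ x ∈ A

/-- Fourier coefficient over the unit cell: `f̂_q = ∫_Q f(x) e^{-2πi q·x} dx`. -/
def fCoeff (d : ℕ) (f : EuclideanSpace ℝ (Fin d) → ℝ) (q : Fin d → ℤ) : ℂ :=
  ∫ x in Qcell d,
    (f x : ℂ) * Complex.exp (-(2 * Real.pi * Complex.I) * (∑ i, (q i : ℝ) * x i : ℝ))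

/-- The function `2·1_A - 1 - ū`. -/
def uSet (d : ℕ) (ub : ℝ) (A : Set (EuclideanSpace ℝ (Fin d))) :
    EuclideanSpace ℝ (Fin d) → ℝ :=
  fun x => A.indicator (fun _ => (2 : ℝ)) x - 1 - ub

/-- The screened Coulomb (nonlocal) part of the sharp interface energy, in Fourier form:
`(1/2)·∑_{q ∈ ℤ^d} |â_q|²/(κ² + 4π²|q|²)` where `â_q` is the Fourier coefficient
of `2·1_A − 1 − ū`. -/
def nonlocalSharp (d : ℕ) (κ ub : ℝ) (A : Set (EuclideanSpace ℝ (Fin d))) : ℝ :=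
  (1 / 2) * ∑' q : Fin d → ℤ,
    (‖fCoeff d (uSet d ub A) q‖) ^ 2
      / (κ ^ 2 + 4 * Real.pi ^ 2 * ∑ i, ((q i : ℝ)) ^ 2)

/-- The sharp interface energy
`E[A] = ε·H^{d-1}(∂A ∩ Q) + (1/2)·∑_{q ∈ ℤ^d} |â_q|²/(κ² + 4π²|q|²)`,
valued in `ℝ≥0∞` since the perimeter term may be infinite. -/
def sharpEnergy (d : ℕ) (κ ε ub : ℝ) (A : Set (EuclideanSpace ℝ (Fin d))) : ℝ≥0∞ :=
  ENNReal.ofReal ε * μH[(d : ℝ) - 1] (frontier A ∩ Qcell d)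
    + ENNReal.ofReal (nonlocalSharp d κ ub A)


/-- The background charge `ū(ε) = −1 + ε^{2/3}·|ln ε|^{1/3}·δ̄`. -/
def ubar (δ ε : ℝ) : ℝ :=
  -1 + ε ^ ((2 : ℝ) / 3) * |Real.log ε| ^ ((1 : ℝ) / 3) * δ

/-! ### Auxiliary lemmas -/

lemma exp1D (n : ℤ) : ∫ t in Set.Ico (0:ℝ) 1,
    Complex.exp ((-(2*Real.pi*Complex.I) * n) * t) = if n = 0 then 1 else 0 := by
  rw [integral_Ico_eq_integral_Ioo, ← integral_Ioc_eq_integral_Ioo,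
    ← intervalIntegral.integral_of_le zero_le_one]
  by_cases h : n = 0
  · simp [h]
  · have hc : -(2*Real.pi*Complex.I) * (n : ℂ) ≠ 0 := by
      refine mul_ne_zero ?_ (by exact_mod_cast h)
      simp [Complex.I_ne_zero, Real.pi_ne_zero, Complex.ext_iff]
    rw [integral_exp_mul_complex hc]
    have h1 : Complex.exp (-(2*Real.pi*Complex.I) * (n:ℂ) * (1:ℝ)) = 1 := by
      have := Complex.exp_int_mul_two_pi_mul_I (-n)
      rw [← this]; congr 1; push_cast; ring
    have h0 : Complex.exp (-(2*Real.pi*Complex.I) * (n:ℂ) * (0:ℝ)) = 1 := by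
      simp
    rw [h1, h0]; simp [h]

lemma measQ (d : ℕ) : MeasurableSet (Qcell d) :=
  MeasurableSet.preimage (MeasurableSet.univ_pi fun _ => measurableSet_Ico)
    (WithLp.measurable_ofLp _ _)

lemma volQ (d : ℕ) : volume (Qcell d) = 1 := by
  have h := (EuclideanSpace.volume_preserving_symm_measurableEquiv_toLp (Fin d)).measure_preimage
    (s := Set.univ.pi fun _ : Fin d => Set.Ico (0:ℝ) 1)
    (MeasurableSet.univ_pi fun _ => measurableSet_Ico).nullMeasurableSet
  have : (MeasurableEquiv.toLp 2 (Fin d → ℝ)).symm ⁻¹'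
      (Set.univ.pi fun _ : Fin d => Set.Ico (0:ℝ) 1) = Qcell d := rfl
  rw [this] at h
  rw [h, volume_pi, Measure.pi_pi]
  simp

lemma int_prod_Qcell (d : ℕ) (g : Fin d → ℝ → ℂ) :
    ∫ x in Qcell d, ∏ i, g i (x i) = ∏ i, ∫ t in Set.Ico (0:ℝ) 1, g i t := by
  have h := (EuclideanSpace.volume_preserving_symm_measurableEquiv_toLp (Fin d)).setIntegral_preimage_emb
    (MeasurableEquiv.toLp 2 (Fin d → ℝ)).symm.measurableEmbedding
    (fun y : Fin d → ℝ => ∏ i, g i (y i)) (Set.univ.pi fun _ => Set.Ico (0:ℝ) 1)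
  have e1 : (∫ x in Qcell d, ∏ i, g i (x i))
      = ∫ y in (Set.univ.pi fun _ : Fin d => Set.Ico (0:ℝ) 1), ∏ i, g i (y i) := h
  rw [e1]
  have hms : MeasurableSet (Set.univ.pi fun _ : Fin d => Set.Ico (0:ℝ) 1) :=
    MeasurableSet.univ_pi fun _ => measurableSet_Ico
  rw [← integral_indicator hms]
  have e2 : (Set.univ.pi fun _ : Fin d => Set.Ico (0:ℝ) 1).indicator
      (fun y => ∏ i, g i (y i))
      = fun y => ∏ i, (Set.Ico (0:ℝ) 1).indicator (g i) (y i) := by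
    funext y
    by_cases hy : y ∈ Set.univ.pi fun _ : Fin d => Set.Ico (0:ℝ) 1
    · rw [Set.indicator_of_mem hy]
      refine Finset.prod_congr rfl fun i _ => ?_
      rw [Set.indicator_of_mem (hy i (Set.mem_univ i))]
    · rw [Set.indicator_of_notMem hy]
      rw [Set.mem_univ_pi] at hy
      push_neg at hy
      obtain ⟨i, hi⟩ := hy
      exact (Finset.prod_eq_zero (Finset.mem_univ i)
        (by rw [Set.indicator_of_notMem hi])).symm
  rw [e2, volume_pi]
  beta_reduce
  rw [MeasureTheory.integral_fintype_prod_eq_prod]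
  exact Finset.prod_congr rfl fun i _ => integral_indicator measurableSet_Ico

lemma expQ (d : ℕ) (q : Fin d → ℤ) :
    ∫ x in Qcell d,
      Complex.exp (-(2 * Real.pi * Complex.I) * ((∑ i, (q i : ℝ) * x i : ℝ) : ℂ))
      = if q = 0 then 1 else 0 := by
  have e : ∀ x : EuclideanSpace ℝ (Fin d),
      Complex.exp (-(2 * Real.pi * Complex.I) * ((∑ i, (q i : ℝ) * x i : ℝ) : ℂ))
      = ∏ i, Complex.exp ((-(2 * Real.pi * Complex.I) * (q i : ℂ)) * (x i : ℂ)) := by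
    intro x
    rw [← Complex.exp_sum]
    congr 1
    push_cast
    rw [Finset.mul_sum]
    refine Finset.sum_congr rfl fun i _ => by ring
  simp_rw [e]
  rw [int_prod_Qcell d (fun i t => Complex.exp ((-(2 * Real.pi * Complex.I) * (q i : ℂ)) * (t : ℂ)))]
  simp_rw [exp1D]
  by_cases hq : q = 0
  · simp [hq]
  · rw [if_neg hq]
    obtain ⟨i, hi⟩ := Function.ne_iff.mp hq
    exact Finset.prod_eq_zero (Finset.mem_univ i)
      (by simp only [Pi.zero_apply] at hi; simp [hi])

section L2
variable (d : ℕ)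

def eQ (q : Fin d → ℤ) : EuclideanSpace ℝ (Fin d) → ℂ :=
  fun x => Complex.exp ((2 * Real.pi * Complex.I) * ((∑ i, (q i : ℝ) * x i : ℝ) : ℂ))

lemma eQ_cont (q : Fin d → ℤ) : Continuous (eQ d q) := by
  unfold eQ
  fun_prop

lemma eQ_norm (q : Fin d → ℤ) (x : EuclideanSpace ℝ (Fin d)) : ‖eQ d q x‖ = 1 := by
  unfold eQ
  rw [Complex.norm_exp]
  simp [mul_comm, Complex.ofReal_mul]

lemma conj_eQ (q : Fin d → ℤ) (x : EuclideanSpace ℝ (Fin d)) :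
    (starRingEnd ℂ) (eQ d q x)
      = Complex.exp (-(2 * Real.pi * Complex.I) * ((∑ i, (q i : ℝ) * x i : ℝ) : ℂ)) := by
  unfold eQ
  rw [← Complex.exp_conj]
  congr 1
  simp only [map_mul, Complex.conj_I, Complex.conj_ofReal, map_ofNat]
  ring

instance : IsFiniteMeasure ((volume : Measure (EuclideanSpace ℝ (Fin d))).restrict (Qcell d)) :=
  ⟨by rw [Measure.restrict_apply_univ, volQ]; exact one_lt_top⟩

lemma eQ_memL2 (q : Fin d → ℤ) :
    MemLp (eQ d q) 2 ((volume : Measure (EuclideanSpace ℝ (Fin d))).restrict (Qcell d)) :=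
  MemLp.of_bound (eQ_cont d q).aestronglyMeasurable 1
    (Filter.Eventually.of_forall fun x => le_of_eq (eQ_norm d q x))

lemma eQ_orthonormal :
    Orthonormal ℂ (fun q : Fin d → ℤ =>
      (eQ_memL2 d q).toLp (eQ d q)) := by
  rw [orthonormal_iff_ite]
  intro q p
  have hinner : (inner ℂ ((eQ_memL2 d q).toLp (eQ d q)) ((eQ_memL2 d p).toLp (eQ d p)) : ℂ)
      = ∫ x in Qcell d, (starRingEnd ℂ) (eQ d q x) * eQ d p x := by
    rw [MeasureTheory.L2.inner_def]
    refine integral_congr_ae ?_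
    filter_upwards [(eQ_memL2 d q).coeFn_toLp, (eQ_memL2 d p).coeFn_toLp] with x h1 h2
    rw [RCLike.inner_apply, h1, h2, mul_comm]
  rw [hinner]
  have e : ∀ x : EuclideanSpace ℝ (Fin d),
      (starRingEnd ℂ) (eQ d q x) * eQ d p x
      = Complex.exp (-(2 * Real.pi * Complex.I) * ((∑ i, ((q - p) i : ℝ) * x i : ℝ) : ℂ)) := by
    intro x
    rw [conj_eQ]
    unfold eQ
    rw [← Complex.exp_add]
    congr 1
    simp only [Pi.sub_apply]
    push_cast
    simp only [sub_mul, Finset.sum_sub_distrib]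
    ring
  simp_rw [e]
  rw [expQ]
  have : q - p = 0 ↔ q = p := sub_eq_zero
  by_cases h : q = p
  · simp [h]
  · rw [if_neg (fun hh => h (this.mp hh)), if_neg h]
end L2

lemma fCoeff_eq_inner (d : ℕ) (f : EuclideanSpace ℝ (Fin d) → ℝ)
    (hf : MemLp (fun x => (f x : ℂ)) 2
      ((volume : Measure (EuclideanSpace ℝ (Fin d))).restrict (Qcell d))) (q : Fin d → ℤ) :
    fCoeff d f q = inner ℂ ((eQ_memL2 d q).toLp (eQ d q)) (hf.toLp _) := by
  rw [MeasureTheory.L2.inner_def]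
  unfold fCoeff
  refine (integral_congr_ae ?_).symm
  filter_upwards [(eQ_memL2 d q).coeFn_toLp, hf.coeFn_toLp] with x h1 h2
  rw [RCLike.inner_apply, h1, h2, conj_eQ, mul_comm]

lemma summable_fCoeff (d : ℕ) (f : EuclideanSpace ℝ (Fin d) → ℝ)
    (hf : MemLp (fun x => (f x : ℂ)) 2
      ((volume : Measure (EuclideanSpace ℝ (Fin d))).restrict (Qcell d))) :
    Summable fun q : Fin d → ℤ => ‖fCoeff d f q‖ ^ 2 := by
  have h := (eQ_orthonormal d).inner_products_summable (x := hf.toLp _)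
  refine h.congr fun q => ?_
  rw [← fCoeff_eq_inner d f hf q]

lemma fCoeff_const (d : ℕ) (a : ℝ) (q : Fin d → ℤ) :
    fCoeff d (fun _ => a) q = if q = 0 then (a : ℂ) else 0 := by
  unfold fCoeff
  rw [MeasureTheory.integral_const_mul, expQ]
  by_cases h : q = 0 <;> simp [h]

lemma fCoeff_zero (d : ℕ) (f : EuclideanSpace ℝ (Fin d) → ℝ) :
    fCoeff d f 0 = ((∫ x in Qcell d, f x : ℝ) : ℂ) := by
  unfold fCoeff
  have e : ∀ x : EuclideanSpace ℝ (Fin d),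
      (f x : ℂ) * Complex.exp (-(2 * Real.pi * Complex.I)
        * ((∑ i, ((0 : Fin d → ℤ) i : ℝ) * x i : ℝ) : ℂ)) = (f x : ℂ) := by
    intro x
    simp
  simp_rw [e]
  exact integral_ofReal

lemma nonlocal_empty (d : ℕ) (κ ub : ℝ) :
    nonlocalSharp d κ ub ∅ = (1/2) * ((1 + ub)^2 / κ^2) := by
  have hu : uSet d ub ∅ = fun _ => -(1 + ub) := by
    funext x; simp [uSet]; ring
  unfold nonlocalSharp
  rw [hu]
  congr 1
  rw [tsum_eq_single 0 (fun q hq => by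
    rw [fCoeff_const, if_neg hq]
    simp)]
  rw [fCoeff_const, if_pos rfl, Complex.norm_real, Real.norm_eq_abs, abs_neg, sq_abs]
  norm_num

lemma nonlocal_lower (d : ℕ) (κ ub : ℝ) (hκ : 0 < κ) (A : Set (EuclideanSpace ℝ (Fin d)))
    (hA : MeasurableSet A) :
    (1/2) * ((2 * (volume (A ∩ Qcell d)).toReal - (1 + ub))^2 / κ^2)
      ≤ nonlocalSharp d κ ub A := by
  set u := uSet d ub A with hudef
  have humeas : Measurable u :=
    ((measurable_const.indicator hA).sub measurable_const).sub measurable_const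
  have hbd : ∀ x, ‖(u x : ℂ)‖ ≤ 2 + |1 + ub| := by
    intro x
    rw [Complex.norm_real]
    have : u x = A.indicator (fun _ => (2:ℝ)) x - (1 + ub) := by rw [hudef]; unfold uSet; ring
    rw [this]
    refine (abs_sub _ _).trans ?_
    gcongr
    by_cases hx : x ∈ A <;> simp [Set.indicator_apply, hx]
  have humem : MemLp (fun x => (u x : ℂ)) 2
      ((volume : Measure (EuclideanSpace ℝ (Fin d))).restrict (Qcell d)) :=
    MemLp.of_bound (Complex.measurable_ofReal.comp humeas).aestronglyMeasurable _
      (Filter.Eventually.of_forall hbd)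
  have hsum2 : Summable fun q : Fin d → ℤ => ‖fCoeff d u q‖ ^ 2 :=
    summable_fCoeff d u humem
  set g : (Fin d → ℤ) → ℝ := fun q =>
    ‖fCoeff d u q‖ ^ 2 / (κ ^ 2 + 4 * Real.pi ^ 2 * ∑ i, ((q i : ℝ)) ^ 2) with hg
  have hgnonneg : ∀ q, 0 ≤ g q := fun q =>
    div_nonneg (sq_nonneg _) (by positivity)
  have hsumg : Summable g := by
    refine Summable.of_nonneg_of_le hgnonneg (fun q => ?_) (hsum2.div_const (κ^2))
    exact div_le_div_of_nonneg_left (sq_nonneg _) (by positivity)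
      (le_add_of_nonneg_right (by positivity))
  have hint : IntegrableOn u (Qcell d) := by
    refine Integrable.sub (Integrable.sub ?_ (integrable_const 1)) (integrable_const ub)
    exact (integrable_const (2:ℝ)).indicator hA
  have hval : ∫ x in Qcell d, u x = 2 * (volume (A ∩ Qcell d)).toReal - (1 + ub) := by
    have h1 : ∫ x in Qcell d, u x
        = (∫ x in Qcell d, A.indicator (fun _ => (2:ℝ)) x) - (∫ _x in Qcell d, (1 + ub)) := by
      have : ∀ x, u x = A.indicator (fun _ => (2:ℝ)) x - (1 + ub) := by
        intro x; rw [hudef]; unfold uSet; ring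
      simp_rw [this]
      exact integral_sub ((integrable_const (2:ℝ)).indicator hA) (integrable_const _)
    rw [h1, integral_indicator_const _ hA, integral_const]
    rw [Measure.real, Measure.real, Measure.restrict_apply hA, Measure.restrict_apply_univ, volQ]
    simp [mul_comm]
  have hg0 : g 0 = (2 * (volume (A ∩ Qcell d)).toReal - (1 + ub))^2 / κ^2 := by
    rw [hg]
    simp only
    rw [fCoeff_zero d u, hval, Complex.norm_real, Real.norm_eq_abs, sq_abs]
    norm_num
  have hle : g 0 ≤ ∑' q, g q := Summable.le_tsum hsumg 0 (fun q _ => hgnonneg q)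
  rw [← hg0]
  unfold nonlocalSharp
  rw [← hudef, ← hg]
  linarith [hle]

theorem statement_8 (κ δ : ℝ) (hκ : 0 < κ) (hδ : 0 < δ) :
    ∃ C > (0 : ℝ), ∃ ε₀ : ℝ, 0 < ε₀ ∧ ε₀ < 1 ∧ ∀ ε : ℝ, 0 < ε → ε ≤ ε₀ →
      ∀ A : Set (EuclideanSpace ℝ (Fin 2)), MeasurableSet A → IsPeriodicSet 2 A →
        (∀ B : Set (EuclideanSpace ℝ (Fin 2)), MeasurableSet B → IsPeriodicSet 2 B →
          sharpEnergy 2 κ ε (ubar δ ε) A ≤ sharpEnergy 2 κ ε (ubar δ ε) B) →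
        volume (A ∩ Qcell 2) ≤
            ENNReal.ofReal (C * ε ^ ((2 : ℝ) / 3) * |Real.log ε| ^ ((1 : ℝ) / 3)) ∧
        μH[(1 : ℝ)] (frontier A ∩ Qcell 2) ≤
            ENNReal.ofReal (C * ε ^ ((1 : ℝ) / 3) * |Real.log ε| ^ ((2 : ℝ) / 3)) := by
  refine ⟨δ + δ^2/(2*κ^2) + 1, by positivity, 1/2, by norm_num, by norm_num, ?_⟩
  intro ε hε hε2 A hA _hper hmin
  set C : ℝ := δ + δ^2/(2*κ^2) + 1 with hC
  set L : ℝ := |Real.log ε| with hLdef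
  have hL : 0 < L := abs_pos.mpr (ne_of_lt (Real.log_neg hε (by linarith)))
  set c : ℝ := ε ^ ((2:ℝ)/3) * L ^ ((1:ℝ)/3) * δ with hc
  have hcpos : 0 < c := by positivity
  have h1ub : 1 + ubar δ ε = c := by unfold ubar; ring
  set E0 : ℝ := (1/2) * (c^2/κ^2) with hE0def
  have hE0pos : 0 < E0 := by positivity
  have hEempty : sharpEnergy 2 κ ε (ubar δ ε) ∅ = ENNReal.ofReal E0 := by
    unfold sharpEnergy
    rw [frontier_empty, Set.empty_inter, measure_empty, mul_zero, zero_add,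
      nonlocal_empty, h1ub]
  have hmin' := hmin ∅ MeasurableSet.empty (by intro n x; simp [Set.mem_empty_iff_false])
  rw [hEempty] at hmin'
  unfold sharpEnergy at hmin'
  -- nonlocal bound
  have hNle : nonlocalSharp 2 κ (ubar δ ε) A ≤ E0 := by
    have h := le_trans (le_add_self (a := ENNReal.ofReal (nonlocalSharp 2 κ (ubar δ ε) A))) hmin'
    exact (ENNReal.ofReal_le_ofReal_iff hE0pos.le).mp h
  set m : ℝ := (volume (A ∩ Qcell 2)).toReal with hm
  have hm0 : (0:ℝ) ≤ m := ENNReal.toReal_nonneg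
  have hlow := nonlocal_lower 2 κ (ubar δ ε) hκ A hA
  rw [h1ub, ← hm] at hlow
  have hκ2 : (0:ℝ) < κ^2 := by positivity
  have hsq : (2*m - c)^2 ≤ c^2 := by
    have h2 := hlow.trans hNle
    rw [hE0def] at h2
    have h3 : (2*m - (1+ubar δ ε))^2/κ^2 ≤ c^2/κ^2 := by
      rw [h1ub] at *
      linarith
    rw [h1ub] at h3
    calc (2*m - c)^2 = ((2*m - c)^2/κ^2) * κ^2 := by field_simp
      _ ≤ (c^2/κ^2) * κ^2 := mul_le_mul_of_nonneg_right h3 hκ2.le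
      _ = c^2 := by field_simp
  have hmc : m ≤ c := by nlinarith [hcpos, hm0, hsq]
  have hfin : volume (A ∩ Qcell 2) ≠ ⊤ := by
    refine ne_top_of_le_ne_top ?_ (measure_mono Set.inter_subset_right)
    rw [volQ]; exact one_ne_top
  constructor
  · rw [← ENNReal.ofReal_toReal hfin, ← hm]
    apply ENNReal.ofReal_le_ofReal
    have hx : (0:ℝ) ≤ ε ^ ((2:ℝ)/3) * L ^ ((1:ℝ)/3) := by positivity
    calc m ≤ c := hmc
      _ = δ * (ε ^ ((2:ℝ)/3) * L ^ ((1:ℝ)/3)) := by rw [hc]; ring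
      _ ≤ C * (ε ^ ((2:ℝ)/3) * L ^ ((1:ℝ)/3)) := by
          refine mul_le_mul_of_nonneg_right ?_ hx
          have hpos : (0:ℝ) ≤ δ^2/(2*κ^2) := by positivity
          rw [hC]; linarith
      _ = C * ε ^ ((2:ℝ)/3) * L ^ ((1:ℝ)/3) := by ring
  · -- perimeter bound
    have hP : ENNReal.ofReal ε * μH[((2:ℕ):ℝ) - 1] (frontier A ∩ Qcell 2)
        ≤ ENNReal.ofReal E0 :=
      le_trans (self_le_add_right _ _) hmin'
    have hidx : ((2:ℕ):ℝ) - 1 = (1:ℝ) := by norm_num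
    rw [hidx] at hP
    have h2 : μH[(1:ℝ)] (frontier A ∩ Qcell 2) ≤ ENNReal.ofReal (E0/ε) := by
      rw [ENNReal.ofReal_div_of_pos hε]
      rw [ENNReal.le_div_iff_mul_le (Or.inl (ENNReal.ofReal_pos.mpr hε).ne')
        (Or.inl ENNReal.ofReal_ne_top)]
      rw [mul_comm]
      exact hP
    refine h2.trans (ENNReal.ofReal_le_ofReal ?_)
    have hc2 : c^2 = δ^2 * (ε ^ ((4:ℝ)/3) * L ^ ((2:ℝ)/3)) := by
      rw [hc, mul_pow, mul_pow, ← Real.rpow_natCast (ε ^ ((2:ℝ)/3)) 2,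
        ← Real.rpow_natCast (L ^ ((1:ℝ)/3)) 2, ← Real.rpow_mul hε.le, ← Real.rpow_mul hL.le]
      norm_num
      ring
    have hε43 : ε ^ ((4:ℝ)/3) / ε = ε ^ ((1:ℝ)/3) := by
      have h := Real.rpow_sub hε ((4:ℝ)/3) 1
      rw [Real.rpow_one] at h
      rw [← h]
      norm_num
    have hE0e : E0/ε = (δ^2/(2*κ^2)) * (ε ^ ((1:ℝ)/3) * L ^ ((2:ℝ)/3)) := by
      rw [hE0def, hc2, ← hε43]
      field_simp
      try ring
    rw [hE0e]
    have hx : (0:ℝ) ≤ ε ^ ((1:ℝ)/3) * L ^ ((2:ℝ)/3) := by positivity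
    calc (δ^2/(2*κ^2)) * (ε ^ ((1:ℝ)/3) * L ^ ((2:ℝ)/3))
        ≤ C * (ε ^ ((1:ℝ)/3) * L ^ ((2:ℝ)/3)) := by
          refine mul_le_mul_of_nonneg_right ?_ hx
          have hpos : (0:ℝ) ≤ δ^2/(2*κ^2) := by positivity
          rw [hC]; linarith
      _ = C * ε ^ ((1:ℝ)/3) * L ^ ((2:ℝ)/3) := by ring
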